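/- There are exactly 2^{n−1} equivalence classes of convex n-near-edges, encoded by sign vectors (ε₁,...,ε_{n−1}) ∈ {±1}^{n−1}; concretely, for each such sign vector the points P_i = (i, ε_i·i(n−i)) for 0 < i < n together with P₀ = (0,0) and P_n = (n,0) are in convex position (all n+1 points are vertices of their convex hull). -/

import Mathlib

/-- The points of the standard convex `n`-near-edge associated to a sign vector `ε`:
`P_i = (i, ε_i · i·(n−i))`. -/
noncomputable def nearEdgePt (n : ℕ) (ε : ℕ → ℤ) (i : ℕ) : ℝ × ℝ :=
  ((i : ℝ), (ε i : ℝ) * (i : ℝ) * ((n : ℝ) - (i : ℝ)))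

/-- Convex near-edges are encoded by sign vectors: for any choice of signs
`ε_i ∈ {±1}`, the `n+1` points `P_i = (i, ε_i·i·(n−i))`, `0 ≤ i ≤ n` (note
`P₀ = (0,0)` and `P_n = (n,0)`), are in strictly convex position: no point lies in
the convex hull of the others. -/
theorem convex_near_edge_convex_position (n : ℕ) (hn : 1 ≤ n)
    (ε : ℕ → ℤ) (hε : ∀ i, ε i = 1 ∨ ε i = -1) :
    ∀ i ≤ n, nearEdgePt n ε i ∉
      convexHull ℝ ((nearEdgePt n ε '' {j | j ≤ n}) \ {nearEdgePt n ε i}) := by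
  intro i hi hmem
  set f : ℝ × ℝ → ℝ := fun p => (ε i : ℝ) * p.2 - ((n : ℝ) - 2 * i) * p.1 with hf
  have hlin : IsLinearMap ℝ f := by
    constructor
    · intro p q; simp only [hf, Prod.fst_add, Prod.snd_add]; ring
    · intro c p; simp only [hf, Prod.smul_fst, Prod.smul_snd, smul_eq_mul]; ring
  have hconv : Convex ℝ {p : ℝ × ℝ | f p < (i : ℝ) ^ 2} := convex_halfSpace_lt hlin _
  have hsub : (nearEdgePt n ε '' {j | j ≤ n}) \ {nearEdgePt n ε i} ⊆
      {p : ℝ × ℝ | f p < (i : ℝ) ^ 2} := by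
    rintro p ⟨⟨j, hj, rfl⟩, hne⟩
    have hji : j ≠ i := by
      intro h; exact hne (by simp [h])
    have hji' : (j : ℝ) ≠ (i : ℝ) := by exact_mod_cast hji
    have hjn : (j : ℝ) ≤ (n : ℝ) := by exact_mod_cast hj
    have hj0 : (0 : ℝ) ≤ (j : ℝ) := Nat.cast_nonneg j
    have hεi : (ε i : ℝ) = 1 ∨ (ε i : ℝ) = -1 := by
      rcases hε i with h | h <;> simp [h]
    have hεj : (ε j : ℝ) = 1 ∨ (ε j : ℝ) = -1 := by
      rcases hε j with h | h <;> simp [h]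
    have key : (ε i : ℝ) * ((ε j : ℝ) * (j : ℝ) * ((n : ℝ) - j)) ≤ (j : ℝ) * ((n : ℝ) - j) := by
      rcases hεi with h | h <;> rcases hεj with h' | h' <;> rw [h, h'] <;> nlinarith
    have hsq : (0 : ℝ) < ((i : ℝ) - j) ^ 2 := by
      have : (i : ℝ) - j ≠ 0 := sub_ne_zero.mpr hji'.symm
      positivity
    simp only [Set.mem_setOf_eq, hf, nearEdgePt]
    nlinarith [key, hsq]
  have h1 := convexHull_min hsub hconv hmem
  have hεi2 : (ε i : ℝ) * (ε i : ℝ) = 1 := by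
    rcases hε i with h | h <;> simp [h]
  simp only [Set.mem_setOf_eq, hf, nearEdgePt] at h1
  have heq : (ε i : ℝ) * ((ε i : ℝ) * (i : ℝ) * ((n : ℝ) - i)) = (i : ℝ) * ((n : ℝ) - i) := by
    rcases hε i with h | h <;> simp [h] <;> ring
  rw [heq] at h1
  nlinarith [h1]
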